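/- For words u and v over a finite alphabet A and an integer k ≥ 1, u ∼_k v if and only if |u| = |v| and either (a) |u| < k and u = v, or (b) |u| ≥ k, u and v have the same number of occurrences of every length-k factor, and the length-(k−1) prefixes of u and v are equal. -/

import Mathlib

/-- Number of (possibly overlapping) occurrences of `w` as a factor of `u`. -/
def countOcc {A : Type*} [DecidableEq A] (u w : List A) : ℕ :=
  (List.range (u.length + 1 - w.length)).countP
    (fun i => decide ((u.drop i).take w.length = w))

/-- `k`-abelian equivalence: equal occurrence counts for all words of length between 1 and `k`. -/
def kAbEq {A : Type*} [DecidableEq A] (k : ℕ) (u v : List A) : Prop :=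
  ∀ w : List A, 1 ≤ w.length → w.length ≤ k → countOcc u w = countOcc v w

/-- The length-`n` factor of the sequence `x` starting at position `i`. -/
def factorAt {A : Type*} (x : ℕ → A) (i n : ℕ) : List A :=
  (List.range n).map (fun j => x (i + j))

/-- The set of length-`n` factors of the sequence `x`. -/
def Fac {A : Type*} (x : ℕ → A) (n : ℕ) : Set (List A) :=
  {u | ∃ i, u = factorAt x i n}

/-- `u` is a factor of the sequence `x`. -/
def IsFactor {A : Type*} (x : ℕ → A) (u : List A) : Prop :=
  ∃ i, u = factorAt x i u.length

/-- The complete invariant of `k`-abelian equivalence: all counts of factors of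
length between `1` and `k`. -/
def kProfile {A : Type*} [DecidableEq A] (k : ℕ) (u : List A) : List A → ℕ :=
  fun w => if 1 ≤ w.length ∧ w.length ≤ k then countOcc u w else 0

/-- The complete invariant of exact `k`-abelian equivalence (for same-length words):
all counts of factors of length exactly `k`. -/
def exProfile {A : Type*} [DecidableEq A] (k : ℕ) (u : List A) : List A → ℕ :=
  fun w => if w.length = k then countOcc u w else 0

/-- The `k`-abelian complexity: number of length-`n` factors of `x` up to `k`-abelian
equivalence. -/
noncomputable def kAbComplexity {A : Type*} [DecidableEq A] (x : ℕ → A) (k n : ℕ) : ℕ :=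
  Set.ncard (kProfile k '' Fac x n)

/-- The exact `k`-abelian complexity: number of length-`n` factors of `x` up to exact
`k`-abelian equivalence. -/
noncomputable def exAbComplexity {A : Type*} [DecidableEq A] (x : ℕ → A) (k n : ℕ) : ℕ :=
  Set.ncard (exProfile k '' Fac x n)

/-- The abelian complexity: number of Parikh vectors of length-`n` factors of `x`. -/
noncomputable def abComplexity {A : Type*} [DecidableEq A] (x : ℕ → A) (n : ℕ) : ℕ :=
  Set.ncard ((fun (u : List A) (a : A) => u.count a) '' Fac x n)

/-- The factor complexity of `x`. -/
noncomputable def factorComplexity {A : Type*} (x : ℕ → A) (n : ℕ) : ℕ :=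
  Set.ncard (Fac x n)


namespace KAbAux

variable {A : Type*} [DecidableEq A]

lemma countOcc_of_length_eq (u w : List A) (h : u.length = w.length) :
    countOcc u w = if u = w then 1 else 0 := by
  have h1 : u.length + 1 - w.length = 1 := by omega
  rw [countOcc, h1, show List.range 1 = [0] from rfl]
  simp only [List.countP_cons, List.countP_nil, List.drop_zero, ← h, List.take_length,
    Nat.zero_add, decide_eq_true_eq]

lemma countOcc_cons (b : A) (u w : List A) :
    countOcc (b :: u) w = (if (b :: u).take w.length = w then 1 else 0) + countOcc u w := by
  rcases le_or_gt w.length (u.length + 1) with hle | hlt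
  · have h1 : (b :: u).length + 1 - w.length = 1 + (u.length + 1 - w.length) := by
      simp only [List.length_cons]; omega
    rw [countOcc, h1, List.range_add, List.countP_append, List.countP_map, countOcc]
    congr 1
    · simp [show List.range 1 = [0] from rfl, List.countP_cons]
    · apply List.countP_congr
      intro j hj
      have hd : (b :: u).drop (1 + j) = u.drop j := by
        rw [Nat.add_comm, List.drop_succ_cons]
      simp [Function.comp, hd]
  · have e1 : (b :: u).length + 1 - w.length = 0 := by simp only [List.length_cons]; omega
    have e2 : u.length + 1 - w.length = 0 := by omega
    rw [countOcc, countOcc, e1, e2]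
    simp only [List.range_zero, List.countP_nil]
    have hne : ¬ (b :: u).take w.length = w := by
      intro hw2
      have := congrArg List.length hw2
      simp only [List.length_take, List.length_cons] at this
      omega
    simp [hne]

lemma countOcc_singleton (u : List A) (a : A) : countOcc u [a] = u.count a := by
  induction u with
  | nil => simp [countOcc]
  | cons b u ih =>
    rw [countOcc_cons b u [a], ih, List.count_cons]
    have ht : (b :: u).take [a].length = [b] := by simp
    rw [ht]
    by_cases hba : b = a <;> simp [hba, Nat.add_comm]

/-- The list of all length-`k` factors of `u` (with multiplicity, by position). -/
def Mk (k : ℕ) (u : List A) : List (List A) :=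
  (List.range (u.length + 1 - k)).map (fun j => (u.drop j).take k)

omit [DecidableEq A] in
lemma mem_Mk_length {k : ℕ} {u : List A} (hk : k ≤ u.length) {z : List A} (hz : z ∈ Mk k u) :
    z.length = k := by
  obtain ⟨j, hj, rfl⟩ := List.mem_map.1 hz
  rw [List.mem_range] at hj
  simp only [List.length_take, List.length_drop]
  omega

lemma countP_Mk (k : ℕ) (u z : List A) (hz : z.length = k) (p : List A → Bool)
    (hp : ∀ y, p y = true ↔ y = z) : (Mk k u).countP p = countOcc u z := by
  rw [Mk, List.countP_map, countOcc, hz]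
  apply List.countP_congr
  intro j hj
  simp [Function.comp, hp]

lemma Mk_perm {k : ℕ} {u v : List A} (hku : k ≤ u.length) (hlen : u.length = v.length)
    (hcnt : ∀ w : List A, w.length = k → countOcc u w = countOcc v w) :
    (Mk k u).Perm (Mk k v) := by
  rw [List.perm_iff_count]
  intro z
  have hc : ∀ l : List (List A), @List.count _ instBEqOfDecidableEq z l
      = l.countP (fun y => decide (y = z)) := fun l => @List.count_eq_countP _ instBEqOfDecidableEq z l
  rw [List.count_eq_countP, List.count_eq_countP]
  by_cases hz : z.length = k
  · rw [countP_Mk k u z hz _ (fun y => by simp), countP_Mk k v z hz _ (fun y => by simp)]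
    exact hcnt z hz
  · rw [List.countP_eq_zero.2 (fun y hy hb =>
        hz (by rw [← show y = z by simpa using hb]; exact mem_Mk_length hku hy)),
      List.countP_eq_zero.2 (fun y hy hb =>
        hz (by rw [← show y = z by simpa using hb];
               exact mem_Mk_length (show k ≤ v.length by omega) hy))]

/-- Decomposition: an occurrence of a short word `w` either lies inside the prefix of
length `k - 1`, or is a suffix of some length-`k` factor. -/
lemma countOcc_decomp {k : ℕ} (u w : List A) (h1 : 1 ≤ w.length) (hmk : w.length ≤ k)
    (hku : k ≤ u.length) :
    countOcc u w = countOcc (u.take (k - 1)) w +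
      (Mk k u).countP (fun z => decide (z.drop (k - w.length) = w)) := by
  have hsplit : u.length + 1 - w.length = (k - w.length) + (u.length + 1 - k) := by omega
  rw [countOcc, hsplit, List.range_add, List.countP_append]
  congr 1
  · rw [countOcc]
    have hlen1 : (u.take (k - 1)).length + 1 - w.length = k - w.length := by
      simp only [List.length_take]; omega
    rw [hlen1]
    apply List.countP_congr
    intro i hi
    rw [List.mem_range] at hi
    have he : ((u.take (k - 1)).drop i).take w.length = (u.drop i).take w.length := by
      rw [List.drop_take, List.take_take]
      congr 1
      omega
    rw [he]
  · rw [Mk, List.countP_map, List.countP_map]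
    apply List.countP_congr
    intro j hj
    simp only [Function.comp]
    have he : ((u.drop j).take k).drop (k - w.length)
        = (u.drop ((k - w.length) + j)).take w.length := by
      rw [List.drop_take, List.drop_drop, Nat.add_comm j,
        show k - (k - w.length) = w.length by omega]
    rw [he]

end KAbAux

open KAbAux

/-- Characterization of `k`-abelian equivalence (Lemma 2.3(2) of Karhumäki et al.). -/
theorem kAbEq_iff_length_eq_and_short_or_exact_and_prefix {A : Type*} [DecidableEq A]
    (k : ℕ) (hk : 1 ≤ k) (u v : List A) :
    kAbEq k u v ↔
      (u.length = v.length ∧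
        ((u.length < k ∧ u = v) ∨
          (k ≤ u.length ∧
            (∀ w : List A, w.length = k → countOcc u w = countOcc v w) ∧
            u.take (k - 1) = v.take (k - 1)))) := by
  constructor
  · intro h
    have hperm : u.Perm v := by
      rw [List.perm_iff_count]
      intro a
      have := h [a] (by simp) (by simpa using hk)
      rwa [countOcc_singleton, countOcc_singleton] at this
    have hlen : u.length = v.length := hperm.length_eq
    refine ⟨hlen, ?_⟩
    rcases lt_or_ge u.length k with hlt | hge
    · left
      refine ⟨hlt, ?_⟩
      rcases Nat.eq_zero_or_pos u.length with h0 | hpos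
      · have hu : u = [] := List.length_eq_zero_iff.1 h0
        have hv : v = [] := List.length_eq_zero_iff.1 (by omega)
        rw [hu, hv]
      · have h1 := h u hpos (le_of_lt hlt)
        rw [countOcc_of_length_eq u u rfl, if_pos rfl,
          countOcc_of_length_eq v u hlen.symm] at h1
        by_contra hne
        rw [if_neg (fun hh => hne hh.symm)] at h1
        omega
    · right
      have hcnt : ∀ w : List A, w.length = k → countOcc u w = countOcc v w := by
        intro w hw
        exact h w (by omega) (by omega)
      refine ⟨hge, hcnt, ?_⟩
      rcases eq_or_lt_of_le hk with h1 | h2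
      · simp [← h1]
      · have hql : (u.take (k - 1)).length = k - 1 := by
          simp only [List.length_take]; omega
        have hcq := h (u.take (k - 1)) (by omega) (by omega)
        have hA := countOcc_decomp u (u.take (k - 1)) (by omega) (by omega) hge
        have hB := countOcc_decomp v (u.take (k - 1)) (by omega) (by omega)
          (by omega : k ≤ v.length)
        have hMk := (Mk_perm hge hlen hcnt).countP_eq
          (fun z => decide (z.drop (k - (u.take (k - 1)).length) = u.take (k - 1)))
        have heq : countOcc (u.take (k - 1)) (u.take (k - 1))
            = countOcc (v.take (k - 1)) (u.take (k - 1)) := by omega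
        rw [countOcc_of_length_eq _ _ rfl, if_pos rfl,
          countOcc_of_length_eq _ _ (by simp only [List.length_take]; omega)] at heq
        by_contra hne
        rw [if_neg (fun hh => hne hh.symm)] at heq
        omega
  · rintro ⟨hlen, ⟨-, rfl⟩ | ⟨hge, hcnt, hpre⟩⟩
    · intro w _ _
      rfl
    · intro w hw1 hwk
      have hA := countOcc_decomp u w hw1 hwk hge
      have hB := countOcc_decomp v w hw1 hwk (by omega : k ≤ v.length)
      have hMk := (Mk_perm hge hlen hcnt).countP_eq
        (fun z => decide (z.drop (k - w.length) = w))
      rw [hpre] at hA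
      omega
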